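/- Let G be a countable discrete group, X a locally compact Hausdorff space with a proper, cocompact G-action, c a cut-off function on X (compactly supported, continuous, nonnegative, with ∑_{h∈G} c(h⁻¹·x)² = 1 for every x), π : C₀(X) → B(H) a nondegenerate covariant representation on the G-Hilbert space H, and V : H → ℓ²(G, H) the isometry (Vv)_h = π(c) u_h v. Then VV* is the bounded operator P on ℓ²(G, H) given by (Pξ)_k = ∑_{h∈G} π(c · ((kh⁻¹)·c)) u_{kh⁻¹} ξ_h (for each ξ and k the sum has only finitely many nonzero terms, by properness); in particular P is an orthogonal projection. -/

import Mathlib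

open scoped ZeroAtInfty
open Filter MeasureTheory Topology

noncomputable section

variable {G : Type*} [Group G] [Countable G] [TopologicalSpace G] [DiscreteTopology G]
variable {X : Type*} [TopologicalSpace X] [LocallyCompactSpace X] [T2Space X]
variable [MulAction G X] [ContinuousConstSMul G X]
variable {H : Type*} [NormedAddCommGroup H] [InnerProductSpace ℂ H] [CompleteSpace H]
  [SecondCountableTopology H]

/-- The translation action of `G` on `C₀(X, ℂ)`: `(g • φ)(x) = φ(g⁻¹ • x)`. -/
def C0smul (g : G) (φ : C₀(X, ℂ)) : C₀(X, ℂ) where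
  toFun := fun x => φ (g⁻¹ • x)
  continuous_toFun := φ.continuous.comp (continuous_const_smul g⁻¹)
  zero_at_infty' := φ.zero_at_infty'.comp
    ((Homeomorph.smul (g⁻¹ : G)).toCocompactMap.cocompact_tendsto')

/-- Conjugation `g(T) = u_g T u_g⁻¹` by the unitary representation `u`. -/
def conjU (u : G →* unitary (H →L[ℂ] H)) (g : G) (T : H →L[ℂ] H) : H →L[ℂ] H :=
  (u g : H →L[ℂ] H) * T * ((u g⁻¹ : unitary (H →L[ℂ] H)) : H →L[ℂ] H)

/-- The Hilbert space `ℓ²(G, H)`. -/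
abbrev l2GH (G H : Type*) [NormedAddCommGroup H] [InnerProductSpace ℂ H] : Type _ :=
  lp (fun _ : G => H) 2

local notation "⟪" x ", " y "⟫" => @inner ℂ _ _ x y

set_option maxHeartbeats 1000000 in
theorem statement_13
    (u : G →* unitary (H →L[ℂ] H))
    (π : C₀(X, ℂ) →⋆ₙₐ[ℂ] (H →L[ℂ] H))
    (hπnd : Dense (Submodule.span ℂ (Set.range fun p : C₀(X, ℂ) × H => π p.1 p.2) : Set H))
    (hcov : ∀ (g : G) (φ : C₀(X, ℂ)),
      (u g : H →L[ℂ] H) * π φ * ((u g⁻¹ : unitary (H →L[ℂ] H)) : H →L[ℂ] H) = π (C0smul g φ))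
    (hproper : IsProperMap fun p : G × X => (p.1 • p.2, p.2))
    (hcocompact : CompactSpace (Quotient (MulAction.orbitRel G X)))
    (c : C₀(X, ℂ)) (hcs : HasCompactSupport (⇑c))
    (hc_real : ∀ x : X, (c x).im = 0) (hc_nonneg : ∀ x : X, 0 ≤ (c x).re)
    (hc_sum : ∀ x : X, HasSum (fun h : G => c (h⁻¹ • x) ^ 2) 1)
    (V : H →L[ℂ] l2GH G H)
    (hViso : ∀ v : H, ‖V v‖ = ‖v‖)
    (hV : ∀ (v : H) (h : G), (V v) h = π c ((u h : H →L[ℂ] H) v)) :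
    (∀ (ξ : l2GH G H) (k : G),
      Set.Finite
        {h : G | π (c * C0smul (k * h⁻¹) c) ((u (k * h⁻¹) : H →L[ℂ] H) (ξ h)) ≠ 0} ∧
      ((V.comp (ContinuousLinearMap.adjoint V)) ξ) k =
        ∑ᶠ h : G, π (c * C0smul (k * h⁻¹) c) ((u (k * h⁻¹) : H →L[ℂ] H) (ξ h))) ∧
    IsSelfAdjoint (V.comp (ContinuousLinearMap.adjoint V)) ∧
    IsIdempotentElem (V.comp (ContinuousLinearMap.adjoint V)) := by
  classical
  -- star of c
  have hstarc : star c = c := by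
    ext x
    simp only [ZeroAtInftyContinuousMap.coe_star, Pi.star_apply, Complex.star_def]
    exact Complex.ext (by simp) (by simp [hc_real x])
  have hπc_star : star (π c) = π c := by rw [← map_star, hstarc]
  -- unitarity facts
  have hu_adj' : ∀ g : G,
      ContinuousLinearMap.adjoint (u g : H →L[ℂ] H) = (u g⁻¹ : H →L[ℂ] H) := by
    intro g
    rw [← ContinuousLinearMap.star_eq_adjoint, ← Unitary.coe_star, Unitary.star_eq_inv, ← map_inv]
  have hu_mul : ∀ (g g' : G) (w : H),
      (u g : H →L[ℂ] H) ((u g' : H →L[ℂ] H) w) = (u (g * g') : H →L[ℂ] H) w := by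
    intro g g' w
    rw [map_mul]; norm_cast
  have hu_inv : ∀ (g : G) (w : H), (u g⁻¹ : H →L[ℂ] H) ((u g : H →L[ℂ] H) w) = w := by
    intro g w
    rw [hu_mul, inv_mul_cancel, map_one, OneMemClass.coe_one, ContinuousLinearMap.one_apply]
  -- inner-product adjunction facts
  have had : ContinuousLinearMap.adjoint (π c) = π c := by
    rw [← ContinuousLinearMap.star_eq_adjoint, hπc_star]
  have hsaπ : ∀ w v : H, ⟪(π c) w, v⟫ = ⟪w, (π c) v⟫ := by
    intro w v
    rw [← ContinuousLinearMap.adjoint_inner_left (π c) v w, had]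
  have hu_adj : ∀ (g : G) (w v : H),
      ⟪(u g : H →L[ℂ] H) w, v⟫ = ⟪w, (u g⁻¹ : H →L[ℂ] H) v⟫ := by
    intro g w v
    rw [← hu_adj' g, ContinuousLinearMap.adjoint_inner_right]
  -- V* V = 1
  have hVV : ContinuousLinearMap.adjoint V ∘L V = 1 :=
    (ContinuousLinearMap.norm_map_iff_adjoint_comp_self V).mp hViso
  -- finiteness of the "interaction" set
  set K := tsupport (⇑c) with hKdef
  have hCcpt : IsCompact ((fun p : G × X => (p.1 • p.2, p.2)) ⁻¹' (K ×ˢ K)) :=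
    hproper.isCompact_preimage (hcs.prod hcs)
  set F : Set G := Prod.fst '' ((fun p : G × X => (p.1 • p.2, p.2)) ⁻¹' (K ×ˢ K)) with hFdef
  have hFfin : F.Finite := (hCcpt.image continuous_fst).finite (isDiscrete_iff_discreteTopology.mpr inferInstance)
  have hzero : ∀ g : G, g ∉ F → c * C0smul g c = 0 := by
    intro g hg
    ext x
    simp only [ZeroAtInftyContinuousMap.coe_mul, Pi.mul_apply,
      ZeroAtInftyContinuousMap.coe_zero, Pi.zero_apply]
    by_contra hne
    have h1 : c x ≠ 0 := fun h => hne (by simp [h])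
    have h2 : (C0smul g c) x ≠ 0 := fun h => hne (by simp [h])
    have hx : x ∈ K := subset_tsupport _ h1
    have hy : g⁻¹ • x ∈ K := subset_tsupport _ h2
    exact hg ⟨(g, g⁻¹ • x), by simp [hx, hy], rfl⟩
  constructor
  · intro ξ k
    set T : G → H := fun h =>
      π (c * C0smul (k * h⁻¹) c) ((u (k * h⁻¹) : H →L[ℂ] H) (ξ h)) with hTdef
    have hsub : {h : G | T h ≠ 0} ⊆ (fun g => g⁻¹ * k) '' F := by
      intro h hh
      refine ⟨k * h⁻¹, ?_, by group⟩
      by_contra hkF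
      refine hh ?_
      simp only [hTdef, hzero _ hkF, map_zero, ContinuousLinearMap.zero_apply]
    have hfin : Set.Finite {h : G | T h ≠ 0} := (hFfin.image _).subset hsub
    refine ⟨hfin, ?_⟩
    -- rewrite each term
    have hT : ∀ h : G, T h = π c ((u (k * h⁻¹) : H →L[ℂ] H) (π c (ξ h))) := by
      intro h
      rw [hTdef]
      simp only
      rw [map_mul, ← hcov (k * h⁻¹) c]
      simp only [ContinuousLinearMap.mul_apply]
      rw [hu_inv]
    apply ext_inner_right ℂ
    intro v
    have hterm : ∀ h : G,
        ⟪T h, v⟫ = ⟪ξ h, π c ((u (h * k⁻¹) : H →L[ℂ] H) (π c v))⟫ := by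
      intro h
      rw [hT h, hsaπ, hu_adj, hsaπ, mul_inv_rev, inv_inv]
    set S := hfin.toFinset with hSdef
    have hfinsum : ∑ᶠ h, T h = ∑ h ∈ S, T h := finsum_eq_sum _ hfin
    calc ⟪((V.comp (ContinuousLinearMap.adjoint V)) ξ) k, v⟫
        = ⟪π c ((u k : H →L[ℂ] H) (ContinuousLinearMap.adjoint V ξ)), v⟫ := by
          rw [ContinuousLinearMap.comp_apply, hV]
      _ = ⟪ContinuousLinearMap.adjoint V ξ, (u k⁻¹ : H →L[ℂ] H) (π c v)⟫ := by
          rw [hsaπ, hu_adj]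
      _ = ⟪ξ, V ((u k⁻¹ : H →L[ℂ] H) (π c v))⟫ :=
          ContinuousLinearMap.adjoint_inner_left V _ _
      _ = ∑' h : G, ⟪ξ h, (V ((u k⁻¹ : H →L[ℂ] H) (π c v))) h⟫ := lp.inner_eq_tsum _ _
      _ = ∑' h : G, ⟪T h, v⟫ := by
          congr 1
          ext h
          rw [hV, hu_mul, hterm]
      _ = ∑ h ∈ S, ⟪T h, v⟫ := by
          refine tsum_eq_sum ?_
          intro h hh
          have : T h = 0 := by
            by_contra h0
            exact hh (hfin.mem_toFinset.mpr h0)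
          rw [this, inner_zero_left]
      _ = ⟪∑ h ∈ S, T h, v⟫ := (sum_inner S T v).symm
      _ = ⟪∑ᶠ h, T h, v⟫ := by rw [hfinsum]
  constructor
  · show star (V.comp (ContinuousLinearMap.adjoint V)) = _
    rw [ContinuousLinearMap.star_eq_adjoint, ContinuousLinearMap.adjoint_comp,
      ContinuousLinearMap.adjoint_adjoint]
  · show _ * _ = _
    ext ξ
    simp only [ContinuousLinearMap.mul_apply, ContinuousLinearMap.comp_apply]
    have h1 : ContinuousLinearMap.adjoint V (V (ContinuousLinearMap.adjoint V ξ)) =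
        ContinuousLinearMap.adjoint V ξ := by
      have := ContinuousLinearMap.ext_iff.mp hVV (ContinuousLinearMap.adjoint V ξ)
      simpa using this
    rw [h1]

end
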